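/- Fix p,q ≥ 1, a family 𝒮 of vertex sets with |δ(S)| ≤ p+q−1 for each S ∈ 𝒮, edge costs c ≥ 0, a partial solution X_{i-1} ⊆ E, and 𝒮_i = {S ∈ 𝒮 : |δ(S) ∩ X_{i-1}| = i−1}. Given a dual-feasible solution y^{(i)} of the augmentation LP (y^{(i)}_S ≥ 0 for S ∈ 𝒮_i, Σ_{S∈𝒮_i: e∈δ(S)} y^{(i)}_S ≤ c_e for all e ∉ X_{i-1}), define y_S = y^{(i)}_S for S ∈ 𝒮_i and 0 otherwise, and z_e = Σ_{S∈𝒮_i: e∈δ(S)} y^{(i)}_S for e ∈ X_{i-1} and 0 otherwise. Then (y,z) is feasible for the dual of the full LP (constraints Σ_{S: e∈δ(S)} y_S − z_e ≤ c_e), and Σ_S p·y_S − Σ_e z_e = (p−i+1) · Σ_{S∈𝒮_i} y^{(i)}_S. -/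
import Mathlib


/-- A finite undirected multigraph: each edge `e` has two (not necessarily distinct)
endpoints `fst e` and `snd e`. -/
structure MGraph (V E : Type*) where
  fst : E → V
  snd : E → V

namespace MGraph

variable {V E : Type*}

/-- `cut G S` is `δ(S)`, the set of edges with exactly one endpoint in `S`. -/
def cut (G : MGraph V E) (S : Set V) : Set E :=
  {e | (G.fst e ∈ S) ↔ (G.snd e ∉ S)}

/-- One step along an edge of `A`. -/
def Step (G : MGraph V E) (A : Set E) (u v : V) : Prop :=
  ∃ e ∈ A, (G.fst e = u ∧ G.snd e = v) ∨ (G.fst e = v ∧ G.snd e = u)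

/-- `u` and `v` are connected using only edges from `A`. -/
def Reach (G : MGraph V E) (A : Set E) (u v : V) : Prop :=
  Relation.ReflTransGen (G.Step A) u v

/-- The spanning subgraph `(V, A)` is connected. -/
def ConnectedOn (G : MGraph V E) (A : Set E) : Prop :=
  ∀ u v : V, G.Reach A u v

/-- The subgraph induced on the vertex set `W`, using only edges of `A` with both
endpoints in `W`, is connected. -/
def InducedConnected (G : MGraph V E) (A : Set E) (W : Set V) : Prop :=
  ∀ u ∈ W, ∀ v ∈ W, G.Reach {e | e ∈ A ∧ G.fst e ∈ W ∧ G.snd e ∈ W} u v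

/-- `s` and `t` are `p`-edge-connected in the spanning subgraph `(V, A)`:
every edge cut separating them has at least `p` edges. -/
def EdgeConnected (G : MGraph V E) (A : Set E) (p : ℕ) (s t : V) : Prop :=
  ∀ S : Set V, s ∈ S → t ∉ S → p ≤ (G.cut S ∩ A).ncard

/-- `S` separates the terminal pair `st`: exactly one of the two terminals lies in `S`. -/
def Separates (S : Set V) (st : V × V) : Prop := (st.1 ∈ S) ↔ (st.2 ∉ S)

/-- `G` is 2-edge-connected: connected, and still connected after removing any single edge. -/
def TwoEdgeConnected (G : MGraph V E) : Prop :=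
  G.ConnectedOn Set.univ ∧ ∀ e : E, G.ConnectedOn {e}ᶜ

/-- `G` is 3-edge-connected: connected, and still connected after removing any two edges. -/
def ThreeEdgeConnected (G : MGraph V E) : Prop :=
  G.ConnectedOn Set.univ ∧ ∀ e f : E, G.ConnectedOn ({e, f} : Set E)ᶜ

/-- `C` is a 2-edge-cut of a 2-edge-connected graph `G`. -/
def TwoEdgeCut (G : MGraph V E) (C : Set E) : Prop :=
  C.ncard = 2 ∧ ¬ G.ConnectedOn Cᶜ

/-- The subgraph of `G` induced on `W` is 2-edge-connected. -/
def InducedTwoEdgeConnected (G : MGraph V E) (W : Set V) : Prop :=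
  G.InducedConnected Set.univ W ∧
    ∀ f : E, G.fst f ∈ W → G.snd f ∈ W → G.InducedConnected {f}ᶜ W

end MGraph

open Classical in
/-- dual mapping lemma. Given a dual-feasible solution `y'` of the
`i`-th augmentation LP, the lifted pair `(y, z)` is feasible for the dual of the full
LP, and its objective satisfies `Σ p·y_S − Σ z_e = (p−i+1)·Σ_{S ∈ 𝒮ᵢ} y'_S`. -/
theorem stmt6 {V E : Type*} [Fintype E] (G : MGraph V E)
    (p q i : ℕ) (hp : 1 ≤ p) (hq : 1 ≤ q) (hi1 : 1 ≤ i) (hip : i ≤ p)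
    (c : E → ℝ) (hc : ∀ e, 0 ≤ c e)
    (𝒮 : Finset (Set V)) (h𝒮 : ∀ S ∈ 𝒮, (G.cut S).ncard ≤ p + q - 1)
    (Xprev : Set E)
    (𝒮i : Finset (Set V))
    (h𝒮i : 𝒮i = 𝒮.filter fun S => (G.cut S ∩ Xprev).ncard = i - 1)
    (y' : Set V → ℝ) (hy' : ∀ S ∈ 𝒮i, 0 ≤ y' S)
    (hfeas : ∀ e ∉ Xprev, ∑ S ∈ 𝒮i.filter (fun S => e ∈ G.cut S), y' S ≤ c e)
    (y : Set V → ℝ) (hy : ∀ S, y S = if S ∈ 𝒮i then y' S else 0)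
    (z : E → ℝ)
    (hz : ∀ e, z e = if e ∈ Xprev then
        ∑ S ∈ 𝒮i.filter (fun S => e ∈ G.cut S), y' S else 0) :
    ((∀ S ∈ 𝒮, 0 ≤ y S) ∧ (∀ e : E, 0 ≤ z e) ∧
      (∀ e : E, ∑ S ∈ 𝒮.filter (fun S => e ∈ G.cut S), y S - z e ≤ c e)) ∧
    ∑ S ∈ 𝒮, (p : ℝ) * y S - ∑ e : E, z e
      = ((p : ℝ) - i + 1) * ∑ S ∈ 𝒮i, y' S := by
  classical
  have hsub : 𝒮i ⊆ 𝒮 := by rw [h𝒮i]; exact Finset.filter_subset _ _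
  -- key sum identity
  have key : ∀ P : Set V → Prop,
      ∑ S ∈ 𝒮.filter (fun S => P S), y S = ∑ S ∈ 𝒮i.filter (fun S => P S), y' S := by
    intro P
    have hset : 𝒮i.filter (fun S => P S)
        = (𝒮.filter (fun S => P S)).filter (fun S => S ∈ 𝒮i) := by
      ext S
      simp only [Finset.mem_filter, h𝒮i]
      tauto
    calc ∑ S ∈ 𝒮.filter (fun S => P S), y S
        = ∑ S ∈ 𝒮.filter (fun S => P S), if S ∈ 𝒮i then y' S else 0 :=
          Finset.sum_congr rfl fun S _ => hy S
      _ = ∑ S ∈ (𝒮.filter (fun S => P S)).filter (fun S => S ∈ 𝒮i), y' S :=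
          (Finset.sum_filter _ _).symm
      _ = ∑ S ∈ 𝒮i.filter (fun S => P S), y' S := by rw [← hset]
  have key0 : ∑ S ∈ 𝒮, y S = ∑ S ∈ 𝒮i, y' S := by
    have := key (fun _ => True)
    simpa using this
  have hynn : ∀ S ∈ 𝒮, 0 ≤ y S := by
    intro S hS
    rw [hy]
    split
    · exact hy' S ‹_›
    · exact le_refl 0
  refine ⟨⟨hynn, ?_, ?_⟩, ?_⟩
  · intro e
    rw [hz]
    split
    · exact Finset.sum_nonneg fun S hS => hy' S (Finset.mem_filter.mp hS).1
    · exact le_refl 0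
  · intro e
    rw [key (fun S => e ∈ G.cut S), hz]
    by_cases he : e ∈ Xprev
    · simp [he, hc e]
    · simpa [he] using hfeas e he
  · -- objective
    have h1 : ∑ S ∈ 𝒮, (p : ℝ) * y S = (p : ℝ) * ∑ S ∈ 𝒮i, y' S := by
      rw [← Finset.mul_sum, key0]
    have hcard : ∀ S ∈ 𝒮i,
        ((Finset.univ.filter (fun e : E => e ∈ Xprev ∧ e ∈ G.cut S)).card : ℝ)
          = (i : ℝ) - 1 := by
      intro S hS
      rw [h𝒮i, Finset.mem_filter] at hS
      have hfin : (G.cut S ∩ Xprev).ncard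
          = (Finset.univ.filter (fun e : E => e ∈ Xprev ∧ e ∈ G.cut S)).card := by
        rw [Set.ncard_eq_toFinset_card']
        congr 1
        ext e
        simp [Set.mem_toFinset, and_comm]
      have := hS.2
      rw [hfin] at this
      rw [this]
      have : (1 : ℝ) ≤ (i : ℝ) := by exact_mod_cast hi1
      push_cast [Nat.cast_sub hi1]
      ring
    have h2 : ∑ e : E, z e = ((i : ℝ) - 1) * ∑ S ∈ 𝒮i, y' S := by
      have : ∑ e : E, z e
          = ∑ e : E, ∑ S ∈ 𝒮i, (if e ∈ Xprev ∧ e ∈ G.cut S then y' S else 0) := by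
        refine Finset.sum_congr rfl fun e _ => ?_
        rw [hz]
        by_cases he : e ∈ Xprev
        · simp only [he, if_true, true_and, Finset.sum_filter]
        · simp [he]
      rw [this, Finset.sum_comm]
      rw [Finset.mul_sum]
      refine Finset.sum_congr rfl fun S hS => ?_
      rw [← Finset.sum_filter, Finset.sum_const, nsmul_eq_mul, hcard S hS]
    rw [h1, h2]
    ring
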